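/- Let $M^n$, $n \geq 3$, be an $n$-dimensional submanifold of an $m$-dimensional, $m \geq 4$, conformally flat Riemannian manifold $(\widetilde{M}^m, \widetilde{g})$. Then the scalar curvature $\tau$ of $M^n$ satisfies $\tau = \frac{n-1}{m-2}\sum_{j=1}^n \widetilde{Ric}(e_j, e_j) - \frac{n(n-1)\widetilde{\tau}}{(m-1)(m-2)} + \sum_{r=1}^{m-n} \sum_{1 \leq i < j \leq n}\left( h_{ii}^r h_{jj}^r - (h_{ij}^r)^2 \right)$, where $\{e_j\}_{1 \leq j \leq n}$ is a local orthonormal tangent frame and $h_{ij}^r = \widetilde{g}(h(e_i, e_j), \upsilon_r)$ are the components of the second fundamental form with respect to a local orthonormal normal frame $\{\upsilon_r\}_{1 \leq r \leq m-n}$. -/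
import Mathlib


open Finset Matrix

/-- Kronecker delta (the components of the metric in an orthonormal frame). -/
noncomputable def kdelta {k : ℕ} (a b : Fin k) : ℝ := if a = b then 1 else 0

/-- The scalar curvature `tau = sum_{i<j} R(e_i, e_j, e_j, e_i)` computed from the
components of the curvature tensor in an orthonormal frame. -/
noncomputable def scalarCurv {n : ℕ} (R : Fin n → Fin n → Fin n → Fin n → ℝ) : ℝ :=
  ∑ i : Fin n, ∑ j : Fin n, if i < j then R i j j i else 0

/-- The normalized scalar curvature `rho = 2 tau / (n (n - 1))`. -/
noncomputable def normScalarCurv {n : ℕ} (R : Fin n → Fin n → Fin n → Fin n → ℝ) : ℝ :=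
  2 * scalarCurv R / ((n : ℝ) * ((n : ℝ) - 1))

/-- The normal scalar curvature `K_N = -(1/4) sum_{r,s} trace ([A_r, A_s]^2)` computed from
the shape operators (given as symmetric matrices in an orthonormal tangent frame). -/
noncomputable def KN {n p : ℕ} (A : Fin p → Matrix (Fin n) (Fin n) ℝ) : ℝ :=
  -(1 / 4) * ∑ r : Fin p, ∑ s : Fin p,
    Matrix.trace ((A r * A s - A s * A r) * (A r * A s - A s * A r))

/-- The normalized normal scalar curvature `rho_N = (2/(n(n-1))) sqrt(K_N)`. -/
noncomputable def rhoN {n p : ℕ} (A : Fin p → Matrix (Fin n) (Fin n) ℝ) : ℝ :=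
  2 / ((n : ℝ) * ((n : ℝ) - 1)) * Real.sqrt (KN A)

/-- The squared mean curvature `|H|^2 = sum_r ((1/n) trace A_r)^2` computed from the
components of the second fundamental form in adapted orthonormal frames. -/
noncomputable def meanCurvSq {n p : ℕ} (A : Fin p → Matrix (Fin n) (Fin n) ℝ) : ℝ :=
  ∑ r : Fin p, ((1 / (n : ℝ)) * ∑ i : Fin n, A r i i) ^ 2

/-- The normalized normal scalar curvature
`rho^perp = (2/(n(n-1))) sqrt( sum_{i<j} sum_{r<s} (Rperp(e_i,e_j,v_r,v_s))^2 )`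
computed from the components of the normal curvature tensor. -/
noncomputable def rhoPerp {n p : ℕ} (Rp : Fin n → Fin n → Fin p → Fin p → ℝ) : ℝ :=
  2 / ((n : ℝ) * ((n : ℝ) - 1)) *
    Real.sqrt (∑ i : Fin n, ∑ j : Fin n, ∑ r : Fin p, ∑ s : Fin p,
      if i < j ∧ r < s then Rp i j r s ^ 2 else 0)

/-- The Ricci curvature `Ric(e_b, e_c) = sum_a R(e_a, e_b, e_c, e_a)` computed from the
components of the curvature tensor in an orthonormal frame. -/
noncomputable def ambRicci {m : ℕ} (Rt : Fin m → Fin m → Fin m → Fin m → ℝ)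
    (b c : Fin m) : ℝ :=
  ∑ a : Fin m, Rt a b c a

/-- The (ambient) scalar curvature `tau = sum_{a<b} sigma(e_a, e_b) = (1/2) sum_a Ric(e_a,e_a)`. -/
noncomputable def ambScalar {m : ℕ} (Rt : Fin m → Fin m → Fin m → Fin m → ℝ) : ℝ :=
  (1 / 2) * ∑ a : Fin m, ambRicci Rt a a

lemma sum_pair_aux {n : ℕ} (f : Fin n → ℝ) :
    ∑ i : Fin n, ∑ j : Fin n, (if i < j then f i + f j else 0)
      = ((n : ℝ) - 1) * ∑ i : Fin n, f i := by
  have h1 : ∀ i j : Fin n, (if i < j then f i + f j else 0)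
      = (if i < j then f i else 0) + (if i < j then f j else 0) := by
    intro i j; split <;> ring
  simp_rw [h1, Finset.sum_add_distrib]
  have h2 : ∑ i : Fin n, ∑ j : Fin n, (if i < j then f j else 0)
      = ∑ i : Fin n, ∑ j : Fin n, (if j < i then f i else 0) := by
    rw [Finset.sum_comm]
  rw [h2, ← Finset.sum_add_distrib]
  simp_rw [← Finset.sum_add_distrib]
  have h3 : ∀ i : Fin n, ∑ j : Fin n,
      ((if i < j then f i else 0) + (if j < i then f i else 0))
      = (n : ℝ) * f i - f i := by
    intro i
    have key : ∀ j : Fin n, (if i < j then f i else 0) + (if j < i then f i else 0)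
        = f i - (if j = i then f i else 0) := by
      intro j
      rcases lt_trichotomy i j with hlt | heq | hgt
      · simp [hlt, hlt.ne', not_lt.mpr hlt.le]
      · simp [heq]
      · simp [hgt, hgt.ne, not_lt.mpr hgt.le]
    simp_rw [key, Finset.sum_sub_distrib, Finset.sum_const, Finset.sum_ite_eq']
    simp [mul_comm]
  simp_rw [h3, Finset.sum_sub_distrib, ← Finset.mul_sum]
  ring

/-- **Scalar curvature of a submanifold of a conformally flat manifold.**
Under the hypotheses `weyl` (conformal flatness of the ambient space) and `gauss`
(Gauss equation), the scalar curvature of the submanifold satisfies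
`τ = ((n-1)/(m-2)) ∑_j Ric~(e_j,e_j) - n(n-1)τ~/((m-1)(m-2))
   + ∑_r ∑_{i<j} ( h^r_ii h^r_jj - (h^r_ij)² )`. -/
theorem scalarCurv_conformally_flat {n m : ℕ} (hn : 3 ≤ n) (hm : 4 ≤ m) (hnm : n ≤ m)
    (Rt : Fin m → Fin m → Fin m → Fin m → ℝ)
    (R : Fin n → Fin n → Fin n → Fin n → ℝ)
    (h : Fin (m - n) → Matrix (Fin n) (Fin n) ℝ)
    (hsymm : ∀ r, (h r).IsSymm)
    (weyl : ∀ x y z w : Fin m, Rt x y z w =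
      (1 / ((m : ℝ) - 2)) *
        (ambRicci Rt y z * kdelta x w - ambRicci Rt x z * kdelta y w
          + ambRicci Rt x w * kdelta y z - ambRicci Rt y w * kdelta x z)
      - (2 * ambScalar Rt / (((m : ℝ) - 1) * ((m : ℝ) - 2))) *
          (kdelta y z * kdelta x w - kdelta x z * kdelta y w))
    (gauss : ∀ i j k l : Fin n, R i j k l =
      Rt (Fin.castLE hnm i) (Fin.castLE hnm j) (Fin.castLE hnm k) (Fin.castLE hnm l)
      + ∑ r : Fin (m - n), (h r i l * h r j k - h r i k * h r j l)) :
    scalarCurv R =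
      (((n : ℝ) - 1) / ((m : ℝ) - 2)) *
          ∑ j : Fin n, ambRicci Rt (Fin.castLE hnm j) (Fin.castLE hnm j)
      - (n : ℝ) * ((n : ℝ) - 1) * ambScalar Rt / (((m : ℝ) - 1) * ((m : ℝ) - 2))
      + ∑ r : Fin (m - n), ∑ i : Fin n, ∑ j : Fin n,
          (if i < j then h r i i * h r j j - h r i j ^ 2 else 0) := by
  classical
  set T := ambScalar Rt with hT
  set c2 : ℝ := 2 * T / (((m : ℝ) - 1) * ((m : ℝ) - 2)) with hc2
  set f : Fin n → ℝ := fun k =>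
    (1 / ((m : ℝ) - 2)) * ambRicci Rt (Fin.castLE hnm k) (Fin.castLE hnm k) - c2 / 2 with hf
  have hRt : ∀ i j : Fin n, i < j →
      Rt (Fin.castLE hnm i) (Fin.castLE hnm j) (Fin.castLE hnm j) (Fin.castLE hnm i)
        = f i + f j := by
    intro i j hij
    have hne : Fin.castLE hnm i ≠ Fin.castLE hnm j := by
      simp [Fin.castLE, Fin.ne_iff_vne, Fin.lt_iff_val_lt_val.mp hij |>.ne]
    rw [weyl]
    simp [kdelta, hne, hne.symm, hf, hc2]
    ring
  unfold scalarCurv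
  have split1 : ∀ i j : Fin n,
      (if i < j then R i j j i else 0)
      = (if i < j then f i + f j else 0)
      + (if i < j then ∑ r : Fin (m - n), (h r i i * h r j j - h r i j * h r j i) else 0) := by
    intro i j
    by_cases hij : i < j
    · rw [if_pos hij, if_pos hij, if_pos hij, gauss, hRt i j hij]
    · simp [hij]
  simp_rw [split1, Finset.sum_add_distrib, sum_pair_aux]
  have hsq : ∀ (r : Fin (m - n)) (i j : Fin n), h r i j * h r j i = h r i j ^ 2 := by
    intro r i j
    rw [show h r j i = (h r)ᵀ i j from rfl, (hsymm r)]
    ring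
  have hB : ∑ i : Fin n, ∑ j : Fin n,
      (if i < j then ∑ r : Fin (m - n), (h r i i * h r j j - h r i j * h r j i) else 0)
      = ∑ r : Fin (m - n), ∑ i : Fin n, ∑ j : Fin n,
          (if i < j then h r i i * h r j j - h r i j ^ 2 else 0) := by
    simp_rw [hsq]
    have step : ∀ i j : Fin n,
        (if i < j then ∑ r : Fin (m - n), (h r i i * h r j j - h r i j ^ 2) else 0)
        = ∑ r : Fin (m - n), (if i < j then h r i i * h r j j - h r i j ^ 2 else 0) := by
      intro i j; split <;> simp
    simp_rw [step]
    have swap1 : ∀ i : Fin n,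
        (∑ j : Fin n, ∑ r : Fin (m - n), if i < j then h r i i * h r j j - h r i j ^ 2 else 0)
        = ∑ r : Fin (m - n), ∑ j : Fin n,
            (if i < j then h r i i * h r j j - h r i j ^ 2 else 0) := fun i => by
      rw [Finset.sum_comm]
    simp_rw [swap1]
    rw [Finset.sum_comm]
  rw [hB]
  have hA : ((n : ℝ) - 1) * ∑ i : Fin n, f i
      = (((n : ℝ) - 1) / ((m : ℝ) - 2)) *
          ∑ j : Fin n, ambRicci Rt (Fin.castLE hnm j) (Fin.castLE hnm j)
      - (n : ℝ) * ((n : ℝ) - 1) * T / (((m : ℝ) - 1) * ((m : ℝ) - 2)) := by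
    simp_rw [hf, Finset.sum_sub_distrib, Finset.sum_const, Finset.card_univ,
      Fintype.card_fin, ← Finset.mul_sum, hc2]
    push_cast
    ring
  rw [hA]
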